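/- Cardinality bound for the max common information: Let A and C be finite index types with cardinalities d_A and d_C, and let ρ be a density matrix on A ⊗ C admitting an ensemble decomposition (n, p, α, γ), i.e., p is a probability vector on Fin n, each α_x is a density matrix on A, each γ_x is a density matrix on C, and Σ_x p_x · α_x ⊗ γ_x = ρ. Then there exists an ensemble decomposition (m, q, β, δ) of ρ with m ≤ d_A²·d_C² + 3 such that I↑_max(AC:X) of its classical extension Σ_i q_i · (β_i ⊗ δ_i) ⊗ E_ii is at most I↑_max(AC:X) of the classical extension Σ_x p_x · (α_x ⊗ γ_x) ⊗ E_xx of the original decomposition. -/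

import Mathlib

open Matrix
open scoped ComplexOrder Kronecker

/-- The max-relative entropy `D_max(P‖Q)`. -/
noncomputable def Dmax {n : Type*} [Fintype n] (P Q : Matrix n n ℂ) : EReal :=
  sInf {x : EReal | ∃ lam : ℝ, x = (lam : EReal) ∧ (Real.exp lam • Q - P).PosSemidef}

/-- A density matrix: positive semidefinite with trace 1. -/
def IsDensity {n : Type*} [Fintype n] (ρ : Matrix n n ℂ) : Prop :=
  ρ.PosSemidef ∧ ρ.trace = 1

/-- Partial trace over the second tensor factor. -/
noncomputable def ptraceSnd {S X : Type*} [Fintype S] [Fintype X]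
    (ρ : Matrix (S × X) (S × X) ℂ) : Matrix S S ℂ :=
  Matrix.of fun s s' => ∑ x, ρ (s, x) (s', x)

/-- The max-mutual information `I↑_max(S:X)`. -/
noncomputable def Iupmax {S X : Type*} [Fintype S] [Fintype X]
    (ρ : Matrix (S × X) (S × X) ℂ) : EReal :=
  sInf {z : EReal | ∃ σ : Matrix X X ℂ, IsDensity σ ∧ z = Dmax ρ (ptraceSnd ρ ⊗ₖ σ)}

/-- The classical extension `Σ_i p_i (α_i ⊗ γ_i) ⊗ E_ii` of an ensemble. -/
noncomputable def cqExt {A C : Type*} [Fintype A] [Fintype C] (m : ℕ) (p : Fin m → ℝ)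
    (α : Fin m → Matrix A A ℂ) (γ : Fin m → Matrix C C ℂ) :
    Matrix ((A × C) × Fin m) ((A × C) × Fin m) ℂ :=
  ∑ i, p i • ((α i ⊗ₖ γ i) ⊗ₖ Matrix.single i i (1 : ℂ))

/-! ### auxiliary lemmas -/


set_option linter.unusedSectionVars false
set_option maxHeartbeats 1000000

section Tools
variable {d e : Type*} [Fintype d] [Fintype e]

lemma herm_smulR {M : Matrix d d ℂ} (h : M.IsHermitian) (r : ℝ) : (r • M).IsHermitian := by
  ext i j
  simp [Matrix.conjTranspose_apply, ← h.apply j i]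

lemma psd_smulR {M : Matrix d d ℂ} (h : M.PosSemidef) {r : ℝ} (hr : 0 ≤ r) :
    (r • M).PosSemidef := by
  refine Matrix.PosSemidef.of_dotProduct_mulVec_nonneg (herm_smulR h.1 r) fun v => ?_
  have := h.dotProduct_mulVec_nonneg v
  simp only [Matrix.smul_mulVec, dotProduct_smul]
  rw [Complex.real_smul]
  exact mul_nonneg (Complex.zero_le_real.2 hr) this

lemma psd_sum' {ι : Type*} (s : Finset ι) (f : ι → Matrix d d ℂ)
    (h : ∀ i ∈ s, (f i).PosSemidef) : (∑ i ∈ s, f i).PosSemidef := by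
  classical
  induction s using Finset.induction_on with
  | empty => simpa using Matrix.PosSemidef.zero
  | insert a s hx ih =>
    rw [Finset.sum_insert hx]
    exact Matrix.PosSemidef.add (h _ (Finset.mem_insert_self _ _))
      (ih fun i hi => h i (Finset.mem_insert_of_mem hi))

lemma kron_ct {a b c f : Type*} (A : Matrix a b ℂ) (B : Matrix c f ℂ) :
    (A ⊗ₖ B)ᴴ = Aᴴ ⊗ₖ Bᴴ := by
  ext ⟨i, j⟩ ⟨k, l⟩
  simp [Matrix.conjTranspose_apply, mul_comm]

lemma psd_kron {P : Matrix d d ℂ} {Q : Matrix e e ℂ} [DecidableEq d] [DecidableEq e]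
    (hP : P.PosSemidef) (hQ : Q.PosSemidef) : (P ⊗ₖ Q).PosSemidef := by
  exact hP.kronecker hQ

lemma psd_diag_nonneg {M : Matrix d d ℂ} [DecidableEq d] (h : M.PosSemidef) (i : d) :
    0 ≤ M i i := by
  have := h.dotProduct_mulVec_nonneg (Pi.single i 1)
  simpa [dotProduct, Matrix.mulVec, Pi.single_apply, Finset.sum_ite_eq'] using this

lemma psd_trace_nonneg' {M : Matrix d d ℂ} (h : M.PosSemidef) : 0 ≤ M.trace := by
  classical
  exact Finset.sum_nonneg fun i _ => psd_diag_nonneg h i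

lemma std_psd [DecidableEq d] (i : d) : (Matrix.single i i (1 : ℂ)).PosSemidef := by
  have : Matrix.single i i (1 : ℂ) = Matrix.diagonal (Pi.single i 1) := by
    ext a b
    simp only [Matrix.single, Matrix.of_apply, Matrix.diagonal_apply, Pi.single_apply]
    by_cases hab : a = b
    · subst hab
      by_cases hia : i = a <;> simp [hia, eq_comm]
    · have : ¬(i = a ∧ i = b) := by rintro ⟨rfl, rfl⟩; exact hab rfl
      simp [hab, this]
  rw [this]
  exact Matrix.PosSemidef.diagonal (fun j => by
    by_cases hj : i = j <;> simp [Pi.single_apply, hj, eq_comm])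
end Tools

section CQ
variable {A C : Type*} [Fintype A] [Fintype C]

lemma cqExt_apply {m : ℕ} (p : Fin m → ℝ) (α : Fin m → Matrix A A ℂ)
    (γ : Fin m → Matrix C C ℂ) (s s' : A × C) (x x' : Fin m) :
    cqExt m p α γ (s, x) (s', x') =
      if x = x' then (p x • (α x ⊗ₖ γ x)) s s' else 0 := by
  simp only [cqExt, Matrix.sum_apply, Matrix.smul_apply, kroneckerMap_apply,
    Matrix.single, Matrix.of_apply]
  rw [Finset.sum_eq_single x]
  · by_cases h : x = x' <;> simp [h, Matrix.smul_apply, kroneckerMap_apply]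
  · intro b _ hb
    simp [hb]
  · simp

lemma ptraceSnd_cqExt {m : ℕ} (p : Fin m → ℝ) (α : Fin m → Matrix A A ℂ)
    (γ : Fin m → Matrix C C ℂ) :
    ptraceSnd (cqExt m p α γ) = ∑ i, p i • (α i ⊗ₖ γ i) := by
  ext s s'
  simp only [ptraceSnd, Matrix.of_apply, cqExt_apply, Matrix.sum_apply]
  simp

lemma block_eval {m : ℕ} (lam : ℝ) (ρ' : Matrix (A × C) (A × C) ℂ)
    (σ : Matrix (Fin m) (Fin m) ℂ) (p : Fin m → ℝ) (α : Fin m → Matrix A A ℂ)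
    (γ : Fin m → Matrix C C ℂ) (x : Fin m) :
    (Matrix.of fun s s' => (Real.exp lam • (ρ' ⊗ₖ σ) - cqExt m p α γ) (s, x) (s', x))
      = ((Real.exp lam : ℂ) * σ x x) • ρ' - p x • (α x ⊗ₖ γ x) := by
  ext s s'
  simp only [Matrix.of_apply, Matrix.sub_apply, Matrix.smul_apply, kroneckerMap_apply,
    cqExt_apply, if_pos rfl, Complex.real_smul, if_true, smul_eq_mul]
  ring

lemma reassemble {m : ℕ} (c : ℝ) (w q : Fin m → ℝ) (β : Fin m → Matrix A A ℂ)
    (δ : Fin m → Matrix C C ℂ) (ρ' : Matrix (A × C) (A × C) ℂ) :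
    c • (ρ' ⊗ₖ (Matrix.diagonal fun i => ((w i : ℝ) : ℂ))) - cqExt m q β δ
      = ∑ i, ((c * w i) • ρ' - q i • (β i ⊗ₖ δ i)) ⊗ₖ Matrix.single i i (1 : ℂ) := by
  ext ⟨s, x⟩ ⟨s', x'⟩
  have hR : (∑ i, ((c * w i) • ρ' - q i • (β i ⊗ₖ δ i)) ⊗ₖ Matrix.single i i (1 : ℂ))
      ((s, x)) ((s', x'))
      = if x = x' then ((c * w x) • ρ' - q x • (β x ⊗ₖ δ x)) s s' else 0 := by
    simp only [Matrix.sum_apply, kroneckerMap_apply, Matrix.single, Matrix.of_apply]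
    rw [Finset.sum_eq_single x]
    · by_cases h : x = x' <;> simp [h]
    · intro b _ hb
      simp [hb]
    · simp
  rw [hR]
  by_cases h : x = x' <;>
    simp [h, cqExt_apply, Matrix.diagonal_apply, Complex.real_smul, mul_comm, mul_left_comm]
end CQ

section Block
variable {S X : Type*} [Fintype S] [Fintype X] [DecidableEq X]

lemma compress_psd {M : Matrix (S × X) (S × X) ℂ} (h : M.PosSemidef) (x : X) :
    (Matrix.of fun s s' => M (s, x) (s', x)).PosSemidef := by
  refine Matrix.PosSemidef.of_dotProduct_mulVec_nonneg ?_ ?_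
  · ext s s'
    simpa [Matrix.conjTranspose_apply] using congrFun (congrFun h.1 (s, x)) (s', x)
  · intro v
    have key : star (fun sy : S × X => if sy.2 = x then v sy.1 else 0) ⬝ᵥ
          (M *ᵥ fun sy : S × X => if sy.2 = x then v sy.1 else 0)
        = star v ⬝ᵥ ((Matrix.of fun s s' => M (s, x) (s', x)) *ᵥ v) := by
      simp only [dotProduct, Matrix.mulVec, Fintype.sum_prod_type, Pi.star_apply,
        Matrix.of_apply, mul_ite, mul_zero,
        Finset.sum_ite_eq', Finset.mem_univ, if_true]
      simp only [apply_ite (star : ℂ → ℂ), star_zero, ite_mul, zero_mul,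
        Finset.sum_ite_eq', Finset.mem_univ, if_true]
    rw [← key]
    exact h.dotProduct_mulVec_nonneg _
end Block

section Tmin
variable {d : Type*} [Fintype d]

lemma tmin_spec {ρ M : Matrix d d ℂ} (hρ : ρ.PosSemidef) (hρt : ρ.trace = 1)
    (hM : M.PosSemidef) (hMt : M.trace = 1)
    (hne : ∃ t : ℝ, ((t : ℝ) • ρ - M).PosSemidef) :
    (∀ t ∈ {t : ℝ | ((t : ℝ) • ρ - M).PosSemidef}, (1 : ℝ) ≤ t) ∧
    1 ≤ sInf {t : ℝ | ((t : ℝ) • ρ - M).PosSemidef} ∧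
      ((sInf {t : ℝ | ((t : ℝ) • ρ - M).PosSemidef}) • ρ - M).PosSemidef := by
  set S : Set ℝ := {t : ℝ | ((t : ℝ) • ρ - M).PosSemidef} with hS
  have h1 : ∀ t ∈ S, (1 : ℝ) ≤ t := by
    intro t ht
    have htr : (0 : ℂ) ≤ ((t - 1 : ℝ) : ℂ) := by
      have := psd_trace_nonneg' ht
      rwa [Matrix.trace_sub, Matrix.trace_smul, hρt, hMt, Complex.real_smul, mul_one,
        show ((t : ℝ) : ℂ) - 1 = ((t - 1 : ℝ) : ℂ) by push_cast; ring] at this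
    linarith [Complex.zero_le_real.1 htr]
  have hbdd : BddBelow S := ⟨1, h1⟩
  have hinf1 : 1 ≤ sInf S := le_csInf hne h1
  refine ⟨h1, hinf1, Matrix.PosSemidef.of_dotProduct_mulVec_nonneg ((herm_smulR hρ.1 _).sub hM.1) fun v => ?_⟩
  set a := star v ⬝ᵥ ρ *ᵥ v with hadef
  set b := star v ⬝ᵥ M *ᵥ v with hbdef
  have ha : 0 ≤ a := hρ.dotProduct_mulVec_nonneg v
  have hb : 0 ≤ b := hM.dotProduct_mulVec_nonneg v
  have haim : a.im = 0 := (Complex.le_def.1 ha).2.symm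
  have hbim : b.im = 0 := (Complex.le_def.1 hb).2.symm
  have hare : 0 ≤ a.re := by simpa using (Complex.le_def.1 ha).1
  have hform : ∀ t : ℝ, star v ⬝ᵥ ((t • ρ - M) *ᵥ v) = (t : ℂ) * a - b := by
    intro t
    rw [Matrix.sub_mulVec, dotProduct_sub, Matrix.smul_mulVec, dotProduct_smul,
      Complex.real_smul]
  have hle : ∀ t ∈ S, b.re ≤ t * a.re := by
    intro t ht
    have := ht.dotProduct_mulVec_nonneg v
    rw [hform t] at this
    have := (Complex.le_def.1 this).1
    simpa [Complex.mul_re, haim] using this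
  have key : b.re ≤ sInf S * a.re := by
    rcases eq_or_lt_of_le hare with h0 | h0
    · obtain ⟨t₀, ht₀⟩ := hne
      have := hle t₀ ht₀
      rw [← h0] at this ⊢
      simpa using this
    · have : b.re / a.re ≤ sInf S := by
        refine le_csInf hne fun t ht => ?_
        exact (div_le_iff₀ h0).2 (hle t ht)
      calc b.re = (b.re / a.re) * a.re := by field_simp
        _ ≤ sInf S * a.re := by nlinarith
  rw [hform]
  rw [Complex.le_def]
  constructor
  · simp [Complex.mul_re, haim]; linarith
  · simp [Complex.mul_im, haim, hbim]
end Tmin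

section Herm
variable (d : Type*) [Fintype d] [DecidableEq d]

noncomputable def hermSub : Submodule ℝ (Matrix d d ℂ) where
  carrier := {M | M.IsHermitian}
  add_mem' := fun h1 h2 => h1.add h2
  zero_mem' := Matrix.isHermitian_zero
  smul_mem' := fun r M h => herm_smulR h r

noncomputable def hermEmbed : hermSub d →ₗ[ℝ] (d × d → ℝ) where
  toFun M := fun ij => if (Fintype.equivFin d) ij.1 ≤ (Fintype.equivFin d) ij.2
      then ((M : Matrix d d ℂ) ij.1 ij.2).re else ((M : Matrix d d ℂ) ij.1 ij.2).im
  map_add' M N := by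
    funext ij
    by_cases h : (Fintype.equivFin d) ij.1 ≤ (Fintype.equivFin d) ij.2 <;>
      simp [h, Matrix.add_apply]
  map_smul' r M := by
    funext ij
    by_cases h : (Fintype.equivFin d) ij.1 ≤ (Fintype.equivFin d) ij.2 <;>
      simp [h, Matrix.smul_apply, Complex.real_smul]

lemma hermEmbed_inj : Function.Injective (hermEmbed d) := by
  rw [injective_iff_map_eq_zero]
  intro M hM0
  have herm : (M : Matrix d d ℂ).IsHermitian := M.2
  apply Subtype.ext
  show (M : Matrix d d ℂ) = 0
  ext i j
  have happ : ∀ ij : d × d, (if (Fintype.equivFin d) ij.1 ≤ (Fintype.equivFin d) ij.2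
      then ((M : Matrix d d ℂ) ij.1 ij.2).re else ((M : Matrix d d ℂ) ij.1 ij.2).im) = 0 :=
    fun ij => congrFun hM0 ij
  set e := Fintype.equivFin d with he
  rcases lt_trichotomy (e i) (e j) with hlt | heq | hgt
  · have h1 := happ (i, j); rw [if_pos hlt.le] at h1
    have h2 := happ (j, i); rw [if_neg (not_le.2 hlt)] at h2
    have hst : ((M : Matrix d d ℂ) j i) = star ((M : Matrix d d ℂ) i j) :=
      (herm.apply j i).symm ▸ rfl
    apply Complex.ext
    · simpa using h1
    · have := congrArg Complex.im hst
      simp only [Complex.star_def, Complex.conj_im] at this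
      simp only [Matrix.zero_apply, Complex.zero_im]
      rw [← neg_eq_zero, ← this]
      exact h2
  · have hij : i = j := e.injective (Fin.ext (le_antisymm heq.le heq.ge))
    subst hij
    have h1 := happ (i, i); rw [if_pos le_rfl] at h1
    have hdiag : ((M : Matrix d d ℂ) i i).im = 0 := by
      have h3 := herm.coe_re_apply_self i
      have := congrArg Complex.im h3
      simpa using this.symm
    exact Complex.ext (by simpa using h1) (by simpa using hdiag)
  · have h1 := happ (i, j); rw [if_neg (not_le.2 hgt)] at h1
    have h2 := happ (j, i); rw [if_pos hgt.le] at h2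
    have hst : ((M : Matrix d d ℂ) i j) = star ((M : Matrix d d ℂ) j i) :=
      (herm.apply i j).symm ▸ rfl
    apply Complex.ext
    · have := congrArg Complex.re hst
      simp only [Complex.star_def, Complex.conj_re] at this
      simp only [Matrix.zero_apply, Complex.zero_re]
      rw [this]
      exact h2
    · simpa using h1

lemma finrank_hermSub_le : Module.finrank ℝ (hermSub d) ≤ Fintype.card d * Fintype.card d := by
  have h1 := LinearMap.finrank_le_finrank_of_injective (hermEmbed_inj d)
  rwa [Module.finrank_pi, Fintype.card_prod] at h1
end Herm

section Cara
variable {E : Type*} [AddCommGroup E] [Module ℝ E] [FiniteDimensional ℝ E]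

lemma caratheodory_package {ι : Type*} [DecidableEq ι] (sF : Finset ι) (v : ι → E) (w : ι → ℝ)
    (hw0 : ∀ i ∈ sF, 0 ≤ w i) (hw1 : ∑ i ∈ sF, w i = 1) :
    ∃ (k : ℕ) (q : Fin k → ℝ) (g : Fin k → ι),
      k ≤ Module.finrank ℝ E + 1 ∧ (∀ j, 0 ≤ q j) ∧ (∑ j, q j = 1) ∧
      (∀ j, g j ∈ sF) ∧ (∑ j, q j • v (g j)) = ∑ i ∈ sF, w i • v i := by
  classical
  set P : E := ∑ i ∈ sF, w i • v i with hP
  have hmem : P ∈ convexHull ℝ (v '' ↑sF) := by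
    have := sF.centerMass_mem_convexHull hw0 (by rw [hw1]; norm_num)
      (fun i hi => Set.mem_image_of_mem v hi)
    rwa [Finset.centerMass_eq_of_sum_1 _ _ hw1] at this
  rw [convexHull_eq_union] at hmem
  simp only [Set.mem_iUnion] at hmem
  obtain ⟨t, hts, hai, hPt⟩ := hmem
  rw [Finset.convexHull_eq] at hPt
  obtain ⟨W, hW0, hW1, hWc⟩ := hPt
  rw [Finset.centerMass_eq_of_sum_1 _ _ hW1] at hWc
  have hcard : Fintype.card ↥t ≤ Module.finrank ℝ E + 1 := by
    refine le_trans hai.card_le_finrank_succ ?_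
    exact Nat.add_le_add_right (Submodule.finrank_le _) 1
  have hch : ∀ y : ↥t, ∃ i, i ∈ sF ∧ v i = (y : E) := by
    intro y
    obtain ⟨i, hi, hvi⟩ := hts y.2
    exact ⟨i, hi, hvi⟩
  set eqv := Fintype.equivFin ↥t with heqv
  refine ⟨Fintype.card ↥t, fun j => W ((eqv.symm j : ↥t) : E),
    fun j => (hch (eqv.symm j)).choose, hcard, ?_, ?_, ?_, ?_⟩
  · intro j; exact hW0 _ (eqv.symm j).2
  · rw [Fintype.sum_equiv eqv.symm (fun j => W ((eqv.symm j : ↥t) : E)) (fun y => W (y : E))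
      (fun j => rfl)]
    rw [Finset.sum_coe_sort]
    exact hW1
  · intro j; exact (hch (eqv.symm j)).choose_spec.1
  · have hval : ∀ j, v ((hch (eqv.symm j)).choose) = ((eqv.symm j : ↥t) : E) :=
      fun j => (hch (eqv.symm j)).choose_spec.2
    calc (∑ j, W ((eqv.symm j : ↥t) : E) • v ((hch (eqv.symm j)).choose))
        = ∑ j, W ((eqv.symm j : ↥t) : E) • ((eqv.symm j : ↥t) : E) :=
          Finset.sum_congr rfl fun j _ => by rw [hval j]
      _ = ∑ y : ↥t, W (y : E) • (y : E) :=
          Fintype.sum_equiv eqv.symm _ _ (fun j => rfl)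
      _ = ∑ y ∈ t, W y • y := Finset.sum_coe_sort t (fun y => W y • y)
      _ = ∑ i ∈ sF, w i • v i := by
          rw [← hP, ← hWc]
          exact Finset.sum_congr rfl fun y _ => by simp
end Cara


/-- Cardinality bound for the max common information: any ensemble
decomposition of a bipartite density matrix can be replaced by one of size at
most `d_A² d_C² + 3` without increasing `I↑_max(AC:X)` of the classical
extension. -/
theorem cardinality_bound_max_common_information
    {A C : Type*} [Fintype A] [Fintype C]
    (ρ : Matrix (A × C) (A × C) ℂ) (hρ : IsDensity ρ)
    (n : ℕ) (p : Fin n → ℝ) (α : Fin n → Matrix A A ℂ) (γ : Fin n → Matrix C C ℂ)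
    (hp : ∀ x, 0 ≤ p x) (hpsum : ∑ x, p x = 1)
    (hα : ∀ x, IsDensity (α x)) (hγ : ∀ x, IsDensity (γ x))
    (hsum : ∑ x, p x • (α x ⊗ₖ γ x) = ρ) :
    ∃ (m : ℕ) (q : Fin m → ℝ) (β : Fin m → Matrix A A ℂ) (δ : Fin m → Matrix C C ℂ),
      m ≤ (Fintype.card A) ^ 2 * (Fintype.card C) ^ 2 + 3 ∧
      (∀ i, 0 ≤ q i) ∧ (∑ i, q i = 1) ∧
      (∀ i, IsDensity (β i)) ∧ (∀ i, IsDensity (δ i)) ∧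
      (∑ i, q i • (β i ⊗ₖ δ i) = ρ) ∧
      Iupmax (cqExt m q β δ) ≤ Iupmax (cqExt n p α γ) := by
  classical
  set M : Fin n → Matrix (A × C) (A × C) ℂ := fun x => α x ⊗ₖ γ x with hM
  have hMpsd : ∀ x, (M x).PosSemidef := fun x => psd_kron (hα x).1 (hγ x).1
  have hMtr : ∀ x, (M x).trace = 1 := fun x => by
    rw [hM]
    simp only [Matrix.trace_kronecker, (hα x).2, (hγ x).2, mul_one]
  -- support
  set sF : Finset (Fin n) := Finset.univ.filter (fun x => 0 < p x) with hsF
  have hoff : ∀ x ∈ Finset.univ, x ∉ sF → p x = 0 := by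
    intro x _ hx
    rcases eq_or_lt_of_le (hp x) with h | h
    · exact h.symm
    · exact absurd (Finset.mem_filter.2 ⟨Finset.mem_univ x, h⟩) hx
  have hmemF : ∀ x ∈ sF, 0 < p x := fun x hx => (Finset.mem_filter.1 hx).2
  have hsum' : ∑ x ∈ sF, p x • M x = ρ := by
    rw [← hsum]
    apply Finset.sum_subset (Finset.subset_univ sF)
    intro x hx h2
    rw [hoff x hx h2, zero_smul]
  have hpsum' : ∑ x ∈ sF, p x = 1 := by
    rw [← hpsum]
    exact Finset.sum_subset (Finset.subset_univ sF) (fun x hx h2 => hoff x hx h2)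
  -- minimal scaling constants
  set T : Fin n → Set ℝ := fun x => {t : ℝ | (t • ρ - M x).PosSemidef} with hT
  have hTne : ∀ x ∈ sF, ((p x)⁻¹ : ℝ) ∈ T x := by
    intro x hx
    have hpx : 0 < p x := hmemF x hx
    show ((p x)⁻¹ • ρ - M x).PosSemidef
    have heq1 : (p x)⁻¹ • ρ - M x = (p x)⁻¹ • (ρ - p x • M x) := by
      rw [smul_sub, smul_smul, inv_mul_cancel₀ hpx.ne', one_smul]
    have heq2 : ρ - p x • M x = ∑ y ∈ Finset.univ.erase x, p y • M y := by
      have := Finset.add_sum_erase Finset.univ (fun y => p y • M y) (Finset.mem_univ x)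
      rw [← hsum]
      rw [← this]
      abel
    rw [heq1, heq2]
    exact psd_smulR (psd_sum' _ _ (fun y _ => psd_smulR (hMpsd y) (hp y)))
      (inv_nonneg.2 hpx.le)
  set tm : Fin n → ℝ := fun x => sInf (T x) with htm
  have htm_spec : ∀ x ∈ sF, (∀ t ∈ T x, (1:ℝ) ≤ t) ∧ 1 ≤ tm x ∧ ((tm x) • ρ - M x).PosSemidef :=
    fun x hx => tmin_spec hρ.1 hρ.2 (hMpsd x) (hMtr x) ⟨_, hTne x hx⟩
  -- Caratheodory
  set v : Fin n → (hermSub (A × C)) × ℝ := fun x => (⟨M x, (hMpsd x).1⟩, tm x) with hv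
  obtain ⟨k, q, g, hk, hq0, hq1, hgmem, hgsum⟩ :=
    caratheodory_package sF v p (fun i _ => hp i) hpsum'
  -- extract the two components of hgsum
  have hfst : ∑ j, q j • M (g j) = ρ := by
    have h1 := congrArg ((hermSub (A × C)).subtype.comp (LinearMap.fst ℝ _ ℝ)) hgsum
    simp only [map_sum, _root_.map_smul] at h1
    calc ∑ j, q j • M (g j)
        = ∑ j, q j • ((hermSub (A × C)).subtype.comp (LinearMap.fst ℝ _ ℝ)) (v (g j)) := rfl
      _ = ∑ x ∈ sF, p x • ((hermSub (A × C)).subtype.comp (LinearMap.fst ℝ _ ℝ)) (v x) := h1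
      _ = ∑ x ∈ sF, p x • M x := rfl
      _ = ρ := hsum'
  have hsnd : ∑ j, q j * tm (g j) = ∑ x ∈ sF, p x * tm x := by
    have h1 := congrArg (LinearMap.snd ℝ (hermSub (A × C)) ℝ) hgsum
    simp only [map_sum, _root_.map_smul] at h1
    calc ∑ j, q j * tm (g j)
        = ∑ j, q j • (LinearMap.snd ℝ (hermSub (A × C)) ℝ) (v (g j)) := rfl
      _ = ∑ x ∈ sF, p x • (LinearMap.snd ℝ (hermSub (A × C)) ℝ) (v x) := h1
      _ = ∑ x ∈ sF, p x * tm x := rfl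
  set c : ℝ := ∑ x ∈ sF, p x * tm x with hc
  have hc1 : 1 ≤ c := by
    rw [hc, ← hpsum']
    refine Finset.sum_le_sum fun x hx => ?_
    have := (htm_spec x hx).2.1
    nlinarith [hmemF x hx, this]
  have hcpos : 0 < c := lt_of_lt_of_le one_pos hc1
  refine ⟨k, q, fun j => α (g j), fun j => γ (g j), ?_, hq0, hq1,
    fun j => hα _, fun j => hγ _, hfst, ?_⟩
  · -- cardinality bound
    refine hk.trans ?_
    have h1 : Module.finrank ℝ ((hermSub (A × C)) × ℝ)
        = Module.finrank ℝ (hermSub (A × C)) + 1 := by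
      rw [Module.finrank_prod, Module.finrank_self]
    have h2 := finrank_hermSub_le (A × C)
    have h3 : Fintype.card (A × C) * Fintype.card (A × C)
        = Fintype.card A ^ 2 * Fintype.card C ^ 2 := by
      rw [Fintype.card_prod]; ring
    omega
  · -- the information inequality
    set β : Fin k → Matrix A A ℂ := fun j => α (g j) with hβ
    set δ : Fin k → Matrix C C ℂ := fun j => γ (g j) with hδ
    have hMg : ∀ j, β j ⊗ₖ δ j = M (g j) := fun j => rfl
    have hptr_new : ptraceSnd (cqExt k q β δ) = ρ := by
      rw [ptraceSnd_cqExt]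
      simpa [hMg] using hfst
    have hptr_old : ptraceSnd (cqExt n p α γ) = ρ := by
      rw [ptraceSnd_cqExt, hsum]
    set w' : Fin k → ℝ := fun j => q j * tm (g j) / c with hw'
    have htm1 : ∀ j, 1 ≤ tm (g j) := fun j => (htm_spec (g j) (hgmem j)).2.1
    have hw'0 : ∀ j, 0 ≤ w' j := fun j =>
      div_nonneg (mul_nonneg (hq0 j) (le_trans zero_le_one (htm1 j))) hcpos.le
    have hw'sum : ∑ j, w' j = 1 := by
      rw [hw']
      rw [← Finset.sum_div, hsnd, div_self hcpos.ne']
    set σ' : Matrix (Fin k) (Fin k) ℂ := Matrix.diagonal (fun j => ((w' j : ℝ) : ℂ)) with hσ'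
    have hσ'den : IsDensity σ' := by
      constructor
      · exact Matrix.PosSemidef.diagonal (fun j => Complex.zero_le_real.2 (hw'0 j))
      · rw [hσ', Matrix.trace_diagonal]
        rw [← Complex.ofReal_sum]
        rw [hw'sum]
        norm_num
    set lam' : ℝ := Real.log c with hlam'
    have hPSD' : (Real.exp lam' • (ρ ⊗ₖ σ') - cqExt k q β δ).PosSemidef := by
      rw [hlam', Real.exp_log hcpos, hσ', reassemble]
      refine psd_sum' _ _ fun j _ => ?_
      refine psd_kron ?_ (std_psd j)
      have he1 : c * w' j = q j * tm (g j) := by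
        rw [hw']
        field_simp
      rw [he1]
      have he2 : (q j * tm (g j)) • ρ - q j • (β j ⊗ₖ δ j)
          = q j • ((tm (g j)) • ρ - M (g j)) := by
        rw [smul_sub, smul_smul, hMg]
      rw [he2]
      exact psd_smulR (htm_spec (g j) (hgmem j)).2.2 (hq0 j)
    have hIup_new : Iupmax (cqExt k q β δ) ≤ (lam' : EReal) := by
      refine le_trans (sInf_le ⟨σ', hσ'den, rfl⟩) ?_
      refine sInf_le ⟨lam', rfl, ?_⟩
      rw [hptr_new]
      exact hPSD'
    refine le_sInf ?_
    rintro z ⟨σ, hσden, rfl⟩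
    refine le_sInf ?_
    rintro y ⟨lam, rfl, hPSDold⟩
    refine le_trans hIup_new ?_
    rw [EReal.coe_le_coe_iff]
    -- show lam' ≤ lam via c ≤ exp lam
    rw [hptr_old] at hPSDold
    have hble : c ≤ Real.exp lam := by
      have hsx : ∀ x : Fin n, 0 ≤ (σ x x).re ∧ (σ x x) = (((σ x x).re : ℝ) : ℂ) := by
        intro x
        have h0 := psd_diag_nonneg hσden.1 x
        constructor
        · exact (Complex.le_def.1 h0).1
        · apply Complex.ext
          · simp
          · simp [← (Complex.le_def.1 h0).2]
      have hblock : ∀ x ∈ sF, p x * tm x ≤ Real.exp lam * (σ x x).re := by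
        intro x hx
        have hpx := hmemF x hx
        have hcp := compress_psd hPSDold x
        rw [block_eval] at hcp
        rw [(hsx x).2] at hcp
        have hcast : ((Real.exp lam : ℂ) * (((σ x x).re : ℝ) : ℂ)) • ρ
            = ((Real.exp lam * (σ x x).re : ℝ)) • ρ := by
          rw [← Complex.ofReal_mul, ← Complex.coe_algebraMap]
          exact algebraMap_smul ℂ _ ρ
        rw [hcast] at hcp
        -- scale by (p x)⁻¹
        have hscaled : ((Real.exp lam * (σ x x).re / p x) • ρ - M x).PosSemidef := by
          have := psd_smulR hcp (inv_nonneg.2 hpx.le)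
          rw [smul_sub, smul_smul, smul_smul, inv_mul_cancel₀ hpx.ne', one_smul] at this
          rw [div_eq_inv_mul]
          exact this
        have hmem2 : (Real.exp lam * (σ x x).re / p x) ∈ T x := hscaled
        have hbddx : BddBelow (T x) := ⟨1, (htm_spec x hx).1⟩
        have := csInf_le hbddx hmem2
        have h5 : tm x ≤ Real.exp lam * (σ x x).re / p x := this
        calc p x * tm x ≤ p x * (Real.exp lam * (σ x x).re / p x) := by
              exact mul_le_mul_of_nonneg_left h5 hpx.le
          _ = Real.exp lam * (σ x x).re := by field_simp
      have hstep1 : c ≤ ∑ x ∈ sF, Real.exp lam * (σ x x).re :=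
        Finset.sum_le_sum hblock
      have hstep2 : ∑ x ∈ sF, Real.exp lam * (σ x x).re
          ≤ ∑ x : Fin n, Real.exp lam * (σ x x).re := by
        refine Finset.sum_le_sum_of_subset_of_nonneg (Finset.subset_univ sF) ?_
        intro x _ _
        exact mul_nonneg (Real.exp_nonneg lam) (hsx x).1
      have hstep3 : ∑ x : Fin n, Real.exp lam * (σ x x).re = Real.exp lam := by
        rw [← Finset.mul_sum]
        have htr : (∑ x : Fin n, σ x x) = (1 : ℂ) := hσden.2
        have : ∑ x : Fin n, (σ x x).re = 1 := by
          have := congrArg Complex.re htr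
          rw [Complex.re_sum] at this
          simpa using this
        rw [this, mul_one]
      linarith
    rw [hlam']
    calc Real.log c ≤ Real.log (Real.exp lam) :=
          Real.log_le_log hcpos hble
      _ = lam := Real.log_exp lam
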